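/- arXiv:1903.09001 — 4 statements merged into one kernel-verified Lean document; each statement's English description precedes it below -/
import Mathlib

section
/- For every even integer n ≥ 2, the dark region has infinite area, i.e. D(n) = ∞ (the two-dimensional Lebesgue measure of the dark region is infinite). -/
open Real MeasureTheory

/-- A point of the Euclidean plane with the given coordinates. -/
noncomputable def pt (a b : ℝ) : EuclideanSpace ℝ (Fin 2) :=
  (EuclideanSpace.equiv (Fin 2) ℝ).symm ![a, b]

/-- The center of lighthouse `i` among `n` lighthouses placed on a circle of radius `n`
around the origin. -/
noncomputable def center (n i : ℕ) : EuclideanSpace ℝ (Fin 2) :=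
  pt (n * Real.cos (2 * Real.pi * i / n)) (n * Real.sin (2 * Real.pi * i / n))

/-- `q` is illuminated by lighthouse `i` (among `n` lighthouses): the angle at the vertex
`center n i` between the origin and `q` is at most `π / n`, and the open segment from
`center n i` to `q` does not meet the closed unit disk around any other lighthouse center. -/
noncomputable def Illuminated (n i : ℕ) (q : EuclideanSpace ℝ (Fin 2)) : Prop :=
  EuclideanGeometry.angle 0 (center n i) q ≤ Real.pi / n ∧
    ∀ j < n, j ≠ i → ∀ p ∈ openSegment ℝ (center n i) q, p ∉ Metric.closedBall (center n j) 1

/-- The dark region: points outside every closed unit disk that are illuminated by no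
lighthouse. -/
noncomputable def darkRegion (n : ℕ) : Set (EuclideanSpace ℝ (Fin 2)) :=
  {q | (∀ i < n, q ∉ Metric.closedBall (center n i) 1) ∧ ∀ i < n, ¬ Illuminated n i q}

/-- `D n` is the two-dimensional Lebesgue measure of the dark region. -/
noncomputable def D (n : ℕ) : ENNReal := volume (darkRegion n)

/- ### Auxiliary lemmas -/

lemma center_apply0 (n i : ℕ) : center n i 0 = n * Real.cos (2 * Real.pi * i / n) := rfl
lemma center_apply1 (n i : ℕ) : center n i 1 = n * Real.sin (2 * Real.pi * i / n) := rfl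

lemma dist_eq_two (u v : EuclideanSpace ℝ (Fin 2)) :
    dist u v = Real.sqrt ((u 0 - v 0)^2 + (u 1 - v 1)^2) := by
  rw [EuclideanSpace.dist_eq, Fin.sum_univ_two]
  simp [Real.dist_eq, sq_abs]

lemma norm_eq_two (u : EuclideanSpace ℝ (Fin 2)) :
    ‖u‖ = Real.sqrt ((u 0)^2 + (u 1)^2) := by
  rw [EuclideanSpace.norm_eq, Fin.sum_univ_two]
  simp [sq_abs]

lemma abs_coord0_le_dist (u v : EuclideanSpace ℝ (Fin 2)) : |u 0 - v 0| ≤ dist u v := by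
  rw [dist_eq_two, ← Real.sqrt_sq_eq_abs]
  exact Real.sqrt_le_sqrt (by linarith [sq_nonneg (u 1 - v 1)])

lemma abs_coord0_le_norm (u : EuclideanSpace ℝ (Fin 2)) : |u 0| ≤ ‖u‖ := by
  rw [norm_eq_two, ← Real.sqrt_sq_eq_abs]
  exact Real.sqrt_le_sqrt (by linarith [sq_nonneg (u 1)])

/-- cos(2πm/n) ≤ cos(2π/n) when 1 ≤ m and 2m ≤ n. -/
lemma cos_aux {n m : ℕ} (hn : 2 ≤ n) (h1 : 1 ≤ m) (h2 : 2 * m ≤ n) :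
    Real.cos (2 * Real.pi * m / n) ≤ Real.cos (2 * Real.pi / n) := by
  have hn0 : (0:ℝ) < n := by positivity
  have hm2 : (2 * m : ℝ) ≤ n := by exact_mod_cast h2
  have hm1 : (1:ℝ) ≤ m := by exact_mod_cast h1
  apply Real.cos_le_cos_of_nonneg_of_le_pi
  · positivity
  · rw [div_le_iff₀ hn0]
    have h3 : 0 ≤ Real.pi * ((n:ℝ) - 2 * m) :=
      mul_nonneg Real.pi_pos.le (by linarith)
    nlinarith [h3]
  · rw [div_le_div_iff₀ hn0 hn0]
    have h3 : 0 ≤ ((m:ℝ) - 1) * Real.pi * n :=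
      mul_nonneg (mul_nonneg (by linarith) Real.pi_pos.le) hn0.le
    nlinarith [h3]

/-- Key fact: cos(2πi/n) ≤ cos(2π/n) for 1 ≤ i ≤ n-1. -/
lemma cos_star {n i : ℕ} (hn : 2 ≤ n) (h1 : 1 ≤ i) (h2 : i < n) :
    Real.cos (2 * Real.pi * i / n) ≤ Real.cos (2 * Real.pi / n) := by
  rcases le_or_gt (2 * i) n with h | h
  · exact cos_aux hn h1 h
  · have hn0 : (n:ℝ) ≠ 0 := by positivity
    have hm : (i:ℝ) = n - (n - i : ℕ) := by
      rw [Nat.cast_sub h2.le]; ring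
    have he : 2 * Real.pi * i / n = 2 * Real.pi - 2 * Real.pi * ((n - i : ℕ) : ℝ) / n := by
      rw [hm]; field_simp
    rw [he, Real.cos_two_pi_sub]
    exact cos_aux hn (by omega) (by omega)

set_option maxHeartbeats 1000000 in
theorem dark_area_infinite_of_even (n : ℕ) (hn : 2 ≤ n) (heven : Even n) :
    D n = ⊤ := by
  obtain ⟨k, hk⟩ := heven
  have hk1 : 1 ≤ k := by omega
  have hn0 : (0:ℝ) < n := by positivity
  have hn2 : (2:ℝ) ≤ n := by exact_mod_cast hn
  set C1 : ℝ := Real.cos (Real.pi / n) with hC1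
  set C2 : ℝ := Real.cos (2 * Real.pi / n) with hC2
  have hpi := Real.pi_pos
  have hCC : C2 < C1 := by
    apply Real.cos_lt_cos_of_nonneg_of_le_pi
    · positivity
    · rw [div_le_iff₀ hn0]
      have h3 : 0 ≤ Real.pi * ((n:ℝ) - 2) := mul_nonneg hpi.le (by linarith)
      nlinarith [h3]
    · rw [div_lt_div_iff₀ hn0 hn0]
      have h3 : 0 < Real.pi * (n:ℝ) := mul_pos hpi hn0
      nlinarith [h3]
  have hC1le : C1 ≤ 1 := Real.cos_le_one _
  have hC1nn : 0 ≤ C1 := by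
    apply Real.cos_nonneg_of_mem_Icc
    constructor
    · have : (0:ℝ) ≤ Real.pi / n := by positivity
      linarith
    · rw [div_le_div_iff₀ hn0 (by norm_num : (0:ℝ) < 2)]
      have h3 : 0 ≤ Real.pi * ((n:ℝ) - 2) := mul_nonneg hpi.le (by linarith)
      nlinarith [h3]
  have hd : (0:ℝ) < C1 - C2 := by linarith
  set X : ℝ := (2 * n + 2) / (C1 - C2) + n + 2 with hXdef
  have hdivnn : 0 ≤ (2 * (n:ℝ) + 2) / (C1 - C2) := div_nonneg (by positivity) hd.le
  have hX1 : (n:ℝ) + 2 ≤ X := by rw [hXdef]; linarith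
  have hX2 : (2 * n + 1 : ℝ) < X * (C1 - C2) := by
    have e0 : X * (C1 - C2) = (2*(n:ℝ)+2)/(C1-C2)*(C1-C2) + ((n:ℝ)+2)*(C1-C2) := by
      rw [hXdef]; ring
    rw [e0, div_mul_cancel₀ _ (ne_of_gt hd)]
    have h3 : 0 ≤ ((n:ℝ)+2)*(C1-C2) := mul_nonneg (by linarith) hd.le
    linarith
  -- the dark strip
  set S : Set (EuclideanSpace ℝ (Fin 2)) := {q | q 0 ≤ -X ∧ |q 1| ≤ 1} with hS
  -- S is contained in the dark region
  have hsub : S ⊆ darkRegion n := by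
    rintro q ⟨hqx, hqy⟩
    set x := q 0 with hx
    set y := q 1 with hy
    have hxneg : x ≤ -((n:ℝ)+2) := le_trans hqx (by linarith)
    constructor
    · -- outside all disks
      intro i _ hmem
      rw [Metric.mem_closedBall] at hmem
      have h1 : |x - center n i 0| ≤ dist q (center n i) := abs_coord0_le_dist _ _
      have h2 : |Real.cos (2 * Real.pi * i / n)| ≤ 1 := Real.abs_cos_le_one _
      rw [center_apply0] at h1
      have h4 : n * (-1:ℝ) ≤ n * Real.cos (2 * Real.pi * i / n) :=
        mul_le_mul_of_nonneg_left (abs_le.1 h2).1 hn0.le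
      have h5 : (2:ℝ) ≤ |x - n * Real.cos (2 * Real.pi * i / n)| := by
        rw [abs_sub_comm, le_abs]
        left; linarith
      linarith
    · -- not illuminated
      intro i hilt hI
      rcases Nat.eq_zero_or_pos i with hi0 | hi1
      · -- lighthouse 0 : blocked by the antipodal disk at center n k
        subst hi0
        obtain ⟨-, hblock⟩ := hI
        have hc00 : center n 0 0 = n := by
          rw [center_apply0]; simp
        have hc01 : center n 0 1 = 0 := by
          rw [center_apply1]; simp
        have hargk : 2 * Real.pi * (k:ℝ) / n = Real.pi := by
          have hnk : (n:ℝ) = 2 * k := by rw [hk]; push_cast; ring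
          have hk0 : (k:ℝ) ≠ 0 := by positivity
          rw [hnk]
          field_simp
        have hck0 : center n k 0 = -n := by rw [center_apply0, hargk]; simp
        have hck1 : center n k 1 = 0 := by rw [center_apply1, hargk]; simp
        -- blocking point
        set t : ℝ := 2 * n / (n - x) with ht
        have hden : (0:ℝ) < n - x := by linarith
        have ht0 : 0 < t := by positivity
        have ht1 : t < 1 := by
          rw [ht, div_lt_one hden]; linarith
        set p : EuclideanSpace ℝ (Fin 2) := (1 - t) • center n 0 + t • q with hp
        have hpseg : p ∈ openSegment ℝ (center n 0) q :=
          ⟨1 - t, t, by linarith, ht0, by ring, rfl⟩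
        refine hblock k (by omega) (by omega) p hpseg ?_
        have hp0 : p 0 = -n := by
          have e : p 0 = (1 - t) * center n 0 0 + t * x := by
            simp [hp, PiLp.add_apply, PiLp.smul_apply, smul_eq_mul, hx]
          rw [e, hc00, ht]
          field_simp
          ring
        have hp1 : p 1 = t * y := by
          have e : p 1 = (1 - t) * center n 0 1 + t * y := by
            simp [hp, PiLp.add_apply, PiLp.smul_apply, smul_eq_mul, hy]
          rw [e, hc01]; ring
        rw [Metric.mem_closedBall, dist_eq_two, hp0, hp1, hck0, hck1]
        have e2 : (-(n:ℝ) - -n)^2 + (t * y - 0)^2 = (t*y)^2 := by ring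
        rw [e2, Real.sqrt_sq_eq_abs, abs_mul]
        calc |t| * |y| ≤ 1 * 1 :=
              mul_le_mul (by rw [abs_of_pos ht0]; exact ht1.le) hqy (abs_nonneg _) zero_le_one
          _ = 1 := by norm_num
      · -- other lighthouses: angle too large
        obtain ⟨hang, -⟩ := hI
        set θ : ℝ := 2 * Real.pi * i / n with hθ
        set c : ℝ := Real.cos θ with hcθ
        set s : ℝ := Real.sin θ with hsθ
        have hcs : c^2 + s^2 = 1 := by
          rw [hcθ, hsθ]; exact Real.cos_sq_add_sin_sq θ
        have hcle : c ≤ C2 := cos_star hn hi1 hilt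
        have hc1 : -1 ≤ c := Real.neg_one_le_cos θ
        have hs1 : |s| ≤ 1 := Real.abs_sin_le_one θ
        set u : EuclideanSpace ℝ (Fin 2) := 0 - center n i with hu
        set v : EuclideanSpace ℝ (Fin 2) := q - center n i with hv
        have hu0 : u 0 = -(n * c) := by
          simp [hu, PiLp.sub_apply, center_apply0, hcθ, hθ]
        have hu1 : u 1 = -(n * s) := by
          simp [hu, PiLp.sub_apply, center_apply1, hsθ, hθ]
        have hv0 : v 0 = x - n * c := by
          simp [hv, PiLp.sub_apply, center_apply0, hcθ, hθ, hx]
        have hv1 : v 1 = y - n * s := by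
          simp [hv, PiLp.sub_apply, center_apply1, hsθ, hθ, hy]
        have hinner : (inner ℝ u v : ℝ) = (n:ℝ)^2 - n * (c * x + s * y) := by
          have e : (inner ℝ u v : ℝ) = u 0 * v 0 + u 1 * v 1 := by
            simp [PiLp.inner_apply, RCLike.inner_apply, Fin.sum_univ_two, mul_comm]
          rw [e, hu0, hu1, hv0, hv1]
          linear_combination (n:ℝ)^2 * hcs
        have hnu : ‖u‖ = n := by
          rw [norm_eq_two, hu0, hu1]
          have e : (-(n*c))^2 + (-(n*s))^2 = (n:ℝ)^2 := by
            linear_combination (n:ℝ)^2 * hcs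
          rw [e, Real.sqrt_sq hn0.le]
        have hnc : (n:ℝ) * (-1) ≤ n * c := mul_le_mul_of_nonneg_left hc1 hn0.le
        have hnv : -x - n ≤ ‖v‖ := by
          have h1 : |v 0| ≤ ‖v‖ := abs_coord0_le_norm v
          have h2 : -x - n ≤ |v 0| := by
            rw [hv0, abs_sub_comm, le_abs]
            left; linarith
          linarith
        have hvpos : (0:ℝ) < ‖v‖ := by linarith
        -- from the angle bound, cos (π/n) ≤ cos (angle u v)
        have hangle_eq : EuclideanGeometry.angle 0 (center n i) q
            = InnerProductGeometry.angle u v := rfl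
        rw [hangle_eq] at hang
        have hcosle : C1 ≤ Real.cos (InnerProductGeometry.angle u v) :=
          Real.cos_le_cos_of_nonneg_of_le_pi (InnerProductGeometry.angle_nonneg u v)
            (by rw [div_le_iff₀ hn0]
                have h3 : 0 ≤ Real.pi * ((n:ℝ) - 1) := mul_nonneg hpi.le (by linarith)
                nlinarith [h3]) hang
        rw [InnerProductGeometry.cos_angle] at hcosle
        have hupos : (0:ℝ) < ‖u‖ := by rw [hnu]; exact hn0
        have hmul : C1 * (‖u‖ * ‖v‖) ≤ (inner ℝ u v : ℝ) :=
          (le_div_iff₀ (mul_pos hupos hvpos)).1 hcosle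
        -- the strict counter-inequality
        have hsy : -1 ≤ s * y := by
          have e : |s * y| ≤ 1 := by
            rw [abs_mul]
            exact mul_le_one₀ hs1 (abs_nonneg _) hqy
          linarith [neg_abs_le (s*y), (abs_le.1 e).1]
        have hA : (2*(n:ℝ)+1) < (-x) * (C1 - c) := by
          have h1 : X * (C1 - C2) ≤ (-x) * (C1 - c) :=
            mul_le_mul (by linarith) (by linarith) hd.le (by linarith)
          linarith
        have hin : (n:ℝ) * (1 + C1) - s * y - (-x) * (C1 - c) < 0 := by
          have h4 : (n:ℝ) * (1 + C1) ≤ n * 2 :=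
            mul_le_mul_of_nonneg_left (by linarith) hn0.le
          linarith
        have hnin : (n:ℝ) * ((n:ℝ) * (1 + C1) - s * y - (-x) * (C1 - c)) < 0 :=
          mul_neg_of_pos_of_neg hn0 hin
        have hkey : (inner ℝ u v : ℝ) < C1 * (n * (-x - n)) := by
          rw [hinner]
          nlinarith [hnin]
        have h3 : C1 * (n * (-x - n)) ≤ C1 * (‖u‖ * ‖v‖) := by
          rw [hnu]
          exact mul_le_mul_of_nonneg_left
            (mul_le_mul_of_nonneg_left hnv hn0.le) hC1nn
        linarith
  -- S has infinite volume
  have hvolS : volume S = ⊤ := by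
    set T : Set (Fin 2 → ℝ) := Set.univ.pi ![Set.Iic (-X), Set.Icc (-1) 1] with hT
    have hTm : MeasurableSet T := by
      apply MeasurableSet.univ_pi
      intro i
      fin_cases i <;> simp [measurableSet_Iic, measurableSet_Icc]
    have hpre : S = (MeasurableEquiv.toLp 2 (Fin 2 → ℝ)).symm ⁻¹' T := by
      ext q
      simp only [hT, Set.mem_preimage, Set.mem_pi, Set.mem_univ, forall_true_left, hS,
        Set.mem_setOf_eq, Fin.forall_fin_two]
      constructor
      · rintro ⟨h1, h2⟩
        exact ⟨by simpa using h1, by simpa [abs_le] using h2⟩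
      · rintro ⟨h1, h2⟩
        exact ⟨by simpa using h1, by simpa [abs_le] using h2⟩
    rw [hpre,
      (EuclideanSpace.volume_preserving_symm_measurableEquiv_toLp (Fin 2)).measure_preimage
        hTm.nullMeasurableSet,
      hT, volume_pi_pi, Fin.prod_univ_two]
    simp only [Matrix.cons_val_zero, Matrix.cons_val_one, Matrix.head_cons,
      Real.volume_Iic, Real.volume_Icc]
    rw [ENNReal.top_mul (by norm_num)]
  have hmono : volume S ≤ volume (darkRegion n) := measure_mono hsub
  rw [hvolS, top_le_iff] at hmono
  exact hmono
end

section
/- Let n ≥ 3 be an integer, and set y = n·sin(π/n) and z = √(4n²·cos²(π/(2n)) − 1). Then y > 1, and x_n = (z + 2n²·sin(π/n)·cos²(π/(2n))) / (y² − 1) is the unique positive real solution of the quadratic equation (y² − 1)·X² − 2z·X + (y² − z²) = 0. -/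
set_option maxHeartbeats 1000000 in
/-- For `n ≥ 3`, with `y = n·sin(π/n)` and `z = √(4n²·cos²(π/(2n)) − 1)`, one has `y > 1`
and `x_n = (z + 2n²·sin(π/n)·cos²(π/(2n)))/(y² − 1)` is the unique positive real solution of
`(y² − 1)·X² − 2z·X + (y² − z²) = 0`. -/
theorem xn_unique_positive_root (n : ℕ) (hn : 3 ≤ n) :
    let y : ℝ := n * Real.sin (Real.pi / n)
    let z : ℝ := Real.sqrt (4 * (n : ℝ) ^ 2 * Real.cos (Real.pi / (2 * n)) ^ 2 - 1)
    let x : ℝ := (z + 2 * (n : ℝ) ^ 2 * Real.sin (Real.pi / n) *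
      Real.cos (Real.pi / (2 * n)) ^ 2) / (y ^ 2 - 1)
    1 < y ∧ 0 < x ∧ (y ^ 2 - 1) * x ^ 2 - 2 * z * x + (y ^ 2 - z ^ 2) = 0 ∧
      ∀ X : ℝ, 0 < X → (y ^ 2 - 1) * X ^ 2 - 2 * z * X + (y ^ 2 - z ^ 2) = 0 → X = x := by
  intro y z x
  have hydef : y = n * Real.sin (Real.pi / n) := rfl
  have hzdef : z = Real.sqrt (4 * (n : ℝ) ^ 2 * Real.cos (Real.pi / (2 * n)) ^ 2 - 1) := rfl
  have hxdef : x = (z + 2 * (n : ℝ) ^ 2 * Real.sin (Real.pi / n) *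
      Real.cos (Real.pi / (2 * n)) ^ 2) / (y ^ 2 - 1) := rfl
  have hn3 : (3:ℝ) ≤ (n:ℝ) := by exact_mod_cast hn
  have hNpos : (0:ℝ) < (n:ℝ) := by linarith
  have hpi := Real.pi_pos
  set N : ℝ := (n : ℝ) with hNdef
  set θ : ℝ := Real.pi / (2 * N) with hθdef
  have hθpos : 0 < θ := by positivity
  have hθle : θ ≤ Real.pi / 6 := by
    rw [hθdef, div_le_div_iff₀ (by linarith) (by norm_num)]
    nlinarith
  set s : ℝ := Real.sin θ with hsdef
  set c : ℝ := Real.cos θ with hcdef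
  have hsc : s ^ 2 + c ^ 2 = 1 := Real.sin_sq_add_cos_sq θ
  have hcge : Real.sqrt 3 / 2 ≤ c := by
    rw [hcdef, ← Real.cos_pi_div_six]
    exact Real.cos_le_cos_of_nonneg_of_le_pi hθpos.le (by linarith) hθle
  have h3 : Real.sqrt 3 ^ 2 = 3 := Real.sq_sqrt (by norm_num)
  have hsqrt3 : 1 < Real.sqrt 3 := by nlinarith [Real.sqrt_nonneg 3]
  have hcpos : 0 < c := by nlinarith
  have hc2 : (3:ℝ)/4 ≤ c ^ 2 := by nlinarith
  have hcc : (1:ℝ) < 4 * N ^ 2 * c ^ 4 := by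
    nlinarith [hc2, hn3, mul_nonneg (sq_nonneg c) (by linarith : (0:ℝ) ≤ c ^ 2 - 3/4)]
  have hspos : 0 < s := Real.sin_pos_of_pos_of_lt_pi hθpos (by nlinarith)
  have hslb : 1 / N ≤ s := by
    have := Real.mul_le_sin hθpos.le (by rw [hθdef]; rw [div_le_div_iff₀ (by linarith) (by linarith)]; nlinarith)
    calc 1 / N = 2 / Real.pi * θ := by rw [hθdef]; field_simp
    _ ≤ s := this
  have hNs : 1 ≤ N * s := by
    rw [div_le_iff₀ hNpos] at hslb; linarith [hslb]
  have h2θ : Real.pi / N = 2 * θ := by rw [hθdef]; field_simp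
  have hy : y = 2 * N * s * c := by
    rw [hydef, h2θ, Real.sin_two_mul]; ring
  have hygt : 1 < y := by nlinarith
  -- z
  have hz2 : z ^ 2 = 4 * N ^ 2 * c ^ 2 - 1 := by
    rw [hzdef]; exact Real.sq_sqrt (by nlinarith [hc2, hn3])
  have hz0 : 0 ≤ z := Real.sqrt_nonneg _
  set w : ℝ := 4 * N ^ 2 * s * c ^ 3 with hwdef
  have hwpos : 0 < w := by positivity
  set A : ℝ := y ^ 2 - 1 with hAdef
  have hApos : 0 < A := by nlinarith
  have hx' : x = (z + w) / A := by
    rw [hxdef, h2θ, Real.sin_two_mul, ← hsdef, ← hcdef, hwdef]; ring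
  have hz2w2 : z ^ 2 - w ^ 2 = A * (y ^ 2 - z ^ 2) := by
    rw [hz2, hwdef, hAdef, hy]
    linear_combination (-(16 * N ^ 4 * c ^ 4 * s ^ 2)) * hsc
  have key : ∀ X : ℝ, A * (A * X ^ 2 - 2 * z * X + (y ^ 2 - z ^ 2)) =
      (A * X - (z + w)) * (A * X - (z - w)) := by
    intro X
    linear_combination (-1 : ℝ) * hz2w2
  have hy2z2 : y ^ 2 - z ^ 2 < 0 := by
    have h4 : (2 * N * s * c) ^ 2 - (4 * N ^ 2 * c ^ 2 - 1) = 1 - 4 * N ^ 2 * c ^ 4 := by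
      linear_combination (4 * N ^ 2 * c ^ 2) * hsc
    rw [hz2, hy]
    linarith [hcc, h4]
  have hzw : z < w := by
    have h1 : z ^ 2 - w ^ 2 < 0 := by
      rw [hz2w2]; exact mul_neg_of_pos_of_neg hApos hy2z2
    by_contra h
    push_neg at h
    have h2 : w ^ 2 ≤ z ^ 2 := pow_le_pow_left₀ hwpos.le h 2
    linarith
  have hAx : A * x = z + w := by
    rw [hx']; field_simp
  have hxpos : 0 < x := by
    rw [hx']; positivity
  refine ⟨hygt, hxpos, ?_, ?_⟩
  · have h0 : A * (A * x ^ 2 - 2 * z * x + (y ^ 2 - z ^ 2)) = 0 := by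
      rw [key x, hAx]; ring
    exact (mul_eq_zero.mp h0).resolve_left (ne_of_gt hApos)
  · intro X hX hPX
    have h := key X
    rw [hPX, mul_zero] at h
    rcases mul_eq_zero.mp h.symm with h' | h'
    · have : A * X = A * x := by rw [hAx]; linarith
      exact mul_left_cancel₀ (ne_of_gt hApos) this
    · exfalso
      have h2 : 0 < A * X := mul_pos hApos hX
      linarith
end

section
/- For every real x > 0, the two-dimensional Lebesgue measure of the set of points that lie in the triangle with vertices (0,0), (1,0), (1,x) (its convex hull) but outside the closed unit disk centered at the origin equals (x − arctan(x))/2. -/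
open MeasureTheory Set

lemma pt_apply_zero (a b : ℝ) : pt a b 0 = a := rfl
lemma pt_apply_one (a b : ℝ) : pt a b 1 = b := rfl

lemma pt_hull (x : ℝ) (hx : 0 < x) :
    convexHull ℝ {pt 0 0, pt 1 0, pt 1 x} =
      {p : EuclideanSpace ℝ (Fin 2) | 0 ≤ p 1 ∧ p 1 ≤ x * p 0 ∧ p 0 ≤ 1} := by
  have hC : Convex ℝ {p : EuclideanSpace ℝ (Fin 2) | 0 ≤ p 1 ∧ p 1 ≤ x * p 0 ∧ p 0 ≤ 1} := by
    have h1 : Convex ℝ {p : EuclideanSpace ℝ (Fin 2) | 0 ≤ p 1} :=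
      convex_halfSpace_ge ⟨fun u v => rfl, fun c u => rfl⟩ 0
    have h2 : Convex ℝ {p : EuclideanSpace ℝ (Fin 2) | p 1 - x * p 0 ≤ 0} :=
      convex_halfSpace_le
        ⟨fun u v => by change (u 1 + v 1) - x * (u 0 + v 0) = _; ring,
         fun c u => by
          change c * u 1 - x * (c * u 0) = c • (u 1 - x * u 0)
          simp only [smul_eq_mul]; ring⟩ 0
    have h3 : Convex ℝ {p : EuclideanSpace ℝ (Fin 2) | p 0 ≤ 1} :=
      convex_halfSpace_le ⟨fun u v => rfl, fun c u => rfl⟩ 1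
    have := (h1.inter (h2.inter h3))
    convert this using 1
    ext p
    simp only [mem_setOf_eq, mem_inter_iff]
    constructor
    · rintro ⟨a, b, c⟩; exact ⟨a, by linarith, c⟩
    · rintro ⟨a, ⟨b, c⟩⟩; exact ⟨a, by linarith, c⟩
  apply Subset.antisymm
  · apply convexHull_min _ hC
    rintro p hp
    simp only [mem_insert_iff, mem_singleton_iff] at hp
    rcases hp with rfl | rfl | rfl <;>
    · simp only [mem_setOf_eq, pt_apply_zero, pt_apply_one]
      refine ⟨?_, ?_, ?_⟩ <;> nlinarith
  · rintro p ⟨h1, h2, h3⟩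
    set S : Set (EuclideanSpace ℝ (Fin 2)) := {pt 0 0, pt 1 0, pt 1 x} with hS
    have hO : pt 0 0 ∈ convexHull ℝ S := subset_convexHull ℝ S (by simp [hS])
    have hA : pt 1 0 ∈ convexHull ℝ S := subset_convexHull ℝ S (by simp [hS])
    have hB : pt 1 x ∈ convexHull ℝ S := subset_convexHull ℝ S (by simp [hS])
    have hp0 : 0 ≤ p 0 := by nlinarith
    by_cases hz : p 0 = 0
    · have hp1 : p 1 = 0 := le_antisymm (by rw [hz] at h2; linarith) h1
      have : p = pt 0 0 := by
        ext i
        fin_cases i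
        · exact hz
        · exact hp1
      rw [this]; exact hO
    · have hp0' : 0 < p 0 := lt_of_le_of_ne hp0 (Ne.symm hz)
      set t : ℝ := p 1 / p 0 with ht
      have ht0 : 0 ≤ t := div_nonneg h1 hp0
      have htx : t ≤ x := by
        rw [ht, div_le_iff₀ hp0']
        linarith [h2]
      have hr : pt 1 t ∈ convexHull ℝ S := by
        have hmem := (convex_convexHull ℝ S) hA hB (a := 1 - t / x) (b := t / x)
          (by rw [sub_nonneg, div_le_one hx]; exact htx) (by positivity) (by ring)
        have : (1 - t / x) • pt 1 0 + (t / x) • pt 1 x = pt 1 t := by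
          ext i
          fin_cases i
          · show (1 - t / x) * 1 + (t / x) * 1 = 1
            ring
          · show (1 - t / x) * 0 + (t / x) * x = t
            field_simp
            ring
        rwa [this] at hmem
      have hcomb := (convex_convexHull ℝ S) hO hr (a := 1 - p 0) (b := p 0)
        (by linarith) hp0 (by ring)
      have : (1 - p 0) • pt 0 0 + p 0 • pt 1 t = p := by
        ext i
        fin_cases i
        · show (1 - p 0) * 0 + p 0 * 1 = p 0
          ring
        · show (1 - p 0) * 0 + p 0 * t = p 1
          rw [ht]
          field_simp
          ring
      rwa [this] at hcomb

lemma graph_null (x : ℝ) :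
    (volume : Measure ℝ).prod volume {p : ℝ × ℝ | p.2 = x * p.1} = 0 := by
  have hm : MeasurableSet {p : ℝ × ℝ | p.2 = x * p.1} :=
    measurableSet_eq_fun measurable_snd (measurable_fst.const_mul x)
  rw [Measure.prod_apply hm]
  have h : ∀ a : ℝ, Prod.mk a ⁻¹' {p : ℝ × ℝ | p.2 = x * p.1} = {x * a} := by
    intro a; ext b; simp [eq_comm]
  simp [h]


lemma region_sub (x c : ℝ) :
    regionBetween (fun a => Real.sqrt (1 - a ^ 2)) (fun a => x * a) (Ioo c 1) ⊆
      {p : ℝ × ℝ | (0 ≤ p.2 ∧ p.2 ≤ x * p.1 ∧ p.1 ≤ 1) ∧ 1 < p.1 ^ 2 + p.2 ^ 2} := by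
  rintro ⟨p1, p2⟩ ⟨⟨hc1', hp1⟩, hpf, hpg⟩
  simp only [mem_setOf_eq] at *
  have hf0 : 0 ≤ Real.sqrt (1 - p1 ^ 2) := Real.sqrt_nonneg _
  refine ⟨⟨by linarith, le_of_lt hpg, hp1.le⟩, ?_⟩
  have hp2 : 0 < p2 := lt_of_le_of_lt hf0 hpf
  have h : 1 - p1 ^ 2 < p2 ^ 2 := by
    rcases le_or_gt (1 - p1 ^ 2) 0 with h | h
    · nlinarith
    · have := Real.sq_sqrt h.le
      nlinarith [hpf]
  linarith

lemma sub_region (x c : ℝ) (hx : 0 < x) (hc0 : 0 < c) (hc2 : c ^ 2 * (1 + x ^ 2) = 1) :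
    {p : ℝ × ℝ | (0 ≤ p.2 ∧ p.2 ≤ x * p.1 ∧ p.1 ≤ 1) ∧ 1 < p.1 ^ 2 + p.2 ^ 2} \
        regionBetween (fun a => Real.sqrt (1 - a ^ 2)) (fun a => x * a) (Ioo c 1) ⊆
      {p : ℝ × ℝ | p.2 = x * p.1} ∪ ({1} : Set ℝ) ×ˢ (univ : Set ℝ) := by
  rintro ⟨p1, p2⟩ ⟨⟨⟨h1, h2, h3⟩, h4⟩, hnr⟩
  by_cases hp1 : p1 = 1
  · right; exact ⟨hp1, trivial⟩
  left
  have hp1' : p1 < 1 := lt_of_le_of_ne h3 hp1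
  have hp10 : 0 ≤ p1 := by nlinarith
  have hcp1 : c < p1 := by
    by_contra hle
    push_neg at hle
    nlinarith [mul_nonneg (mul_nonneg (sub_nonneg.2 hle) (by linarith : (0:ℝ) ≤ p1 + c))
      (by positivity : (0:ℝ) ≤ 1 + x ^ 2)]
  have hp20 : 0 < p2 := by
    rcases h1.lt_or_eq with h | h
    · exact h
    · exfalso; nlinarith
  have hfp : Real.sqrt (1 - p1 ^ 2) < p2 := by
    rcases le_or_gt (1 - p1 ^ 2) 0 with h | h
    · calc Real.sqrt (1 - p1 ^ 2) = 0 := Real.sqrt_eq_zero_of_nonpos h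
      _ < p2 := hp20
    · rw [show p2 = Real.sqrt (p2 ^ 2) from (Real.sqrt_sq hp20.le).symm]
      exact Real.sqrt_lt_sqrt h.le (by linarith)
  simp only [regionBetween, mem_setOf_eq, mem_Ioo, not_and, not_lt] at hnr
  exact le_antisymm h2 (hnr ⟨hcp1, hp1'⟩ hfp)


open Real in
lemma key_integral (x c : ℝ) (hx : 0 < x) (hc0 : 0 < c) (hc1 : c < 1)
    (hxc : Real.sqrt (1 - c ^ 2) = x * c)
    (harcsinc : Real.arcsin c = Real.pi / 2 - Real.arctan x) :
    ∫ y in Ioo c 1, ((fun a => x * a) - fun a => Real.sqrt (1 - a ^ 2)) y =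
      (x - Real.arctan x) / 2 := by
  have hfc : Continuous fun a : ℝ => Real.sqrt (1 - a ^ 2) := by
    apply Real.continuous_sqrt.comp; continuity
  have hgc : Continuous fun a : ℝ => x * a := by continuity
  have h1 : ∫ y in Ioo c 1, ((fun a => x * a) - fun a => Real.sqrt (1 - a ^ 2)) y
      = ∫ y in c..1, (x * y - Real.sqrt (1 - y ^ 2)) := by
    rw [intervalIntegral.integral_of_le hc1.le, MeasureTheory.integral_Ioc_eq_integral_Ioo]
    rfl
  rw [h1]
  have hint_f' : IntervalIntegrable (fun a : ℝ => Real.sqrt (1 - a ^ 2)) volume c 1 :=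
    hfc.intervalIntegrable c 1
  have hint_g' : IntervalIntegrable (fun a : ℝ => x * a) volume c 1 :=
    hgc.intervalIntegrable c 1
  rw [intervalIntegral.integral_sub hint_g' hint_f']
  have hgint : ∫ y in c..1, x * y = x * ((1 - c ^ 2) / 2) := by
    rw [intervalIntegral.integral_const_mul, integral_id]
    ring
  set F : ℝ → ℝ := fun a => (a * Real.sqrt (1 - a ^ 2) + Real.arcsin a) / 2 with hFdef
  have hFderiv : ∀ t ∈ Ioo c 1, HasDerivAt F (Real.sqrt (1 - t ^ 2)) t := by
    rintro t ⟨ht1, ht2⟩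
    have ht0 : 0 < t := lt_trans hc0 ht1
    have h1t : (0:ℝ) < 1 - t ^ 2 := by nlinarith
    have hs0 : 0 < Real.sqrt (1 - t ^ 2) := Real.sqrt_pos.2 h1t
    have hinner : HasDerivAt (fun a : ℝ => 1 - a ^ 2) (-(2 * t)) t := by
      simpa using (hasDerivAt_pow 2 t).const_sub 1
    have hsq : HasDerivAt (fun a : ℝ => Real.sqrt (1 - a ^ 2))
        (1 / (2 * Real.sqrt (1 - t ^ 2)) * (-(2 * t))) t :=
      (Real.hasDerivAt_sqrt h1t.ne').comp t hinner
    have harcsin : HasDerivAt Real.arcsin (1 / Real.sqrt (1 - t ^ 2)) t :=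
      Real.hasDerivAt_arcsin (by linarith) (by linarith)
    have hmul : HasDerivAt (fun a : ℝ => a * Real.sqrt (1 - a ^ 2))
        (1 * Real.sqrt (1 - t ^ 2) + t * (1 / (2 * Real.sqrt (1 - t ^ 2)) * (-(2 * t)))) t :=
      (hasDerivAt_id t).mul hsq
    have htotal := (hmul.add harcsin).div_const 2
    refine htotal.congr_deriv ?_
    have hss : Real.sqrt (1 - t ^ 2) * Real.sqrt (1 - t ^ 2) = 1 - t ^ 2 :=
      Real.mul_self_sqrt h1t.le
    field_simp
    nlinarith [hss]
  have hFcont : ContinuousOn F (Icc c 1) := by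
    apply Continuous.continuousOn
    rw [hFdef]
    have : Continuous fun a : ℝ => Real.sqrt (1 - a ^ 2) := hfc
    continuity
  have hfint : ∫ y in c..1, Real.sqrt (1 - y ^ 2) = F 1 - F c :=
    intervalIntegral.integral_eq_sub_of_hasDerivAt_of_le hc1.le hFcont hFderiv hint_f'
  have hF1 : F 1 = Real.pi / 4 := by
    rw [hFdef]
    norm_num [Real.arcsin_one]
    ring
  have hFc : F c = (x * c ^ 2 + (Real.pi / 2 - Real.arctan x)) / 2 := by
    rw [hFdef]
    simp only
    rw [hxc, harcsinc]
    ring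
  rw [hgint, hfint, hF1, hFc]
  ring

/-- The area of the part of the triangle with vertices `(0,0)`, `(1,0)`, `(1,x)` lying
outside the closed unit disk centered at the origin is `(x − arctan x)/2`. -/
theorem triangle_sub_disk_area (x : ℝ) (hx : 0 < x) :
    volume (convexHull ℝ {pt 0 0, pt 1 0, pt 1 x} \
        Metric.closedBall (0 : EuclideanSpace ℝ (Fin 2)) 1) =
      ENNReal.ofReal ((x - Real.arctan x) / 2) := by
  set c : ℝ := (Real.sqrt (1 + x ^ 2))⁻¹ with hcdef
  have hs1 : (1 : ℝ) < Real.sqrt (1 + x ^ 2) := by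
    have h : (1:ℝ) < 1 + x ^ 2 := by nlinarith
    calc (1:ℝ) = Real.sqrt 1 := Real.sqrt_one.symm
    _ < Real.sqrt (1 + x ^ 2) := Real.sqrt_lt_sqrt (by norm_num) h
  have hc0 : 0 < c := by rw [hcdef]; positivity
  have hc1 : c < 1 := by
    rw [hcdef]
    exact inv_lt_one_of_one_lt₀ hs1
  have hc2 : c ^ 2 * (1 + x ^ 2) = 1 := by
    rw [hcdef, inv_pow, Real.sq_sqrt (by positivity : (0:ℝ) ≤ 1 + x ^ 2)]
    field_simp
  have hxc : Real.sqrt (1 - c ^ 2) = x * c := by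
    have h : 1 - c ^ 2 = (x * c) ^ 2 := by nlinarith
    rw [h, Real.sqrt_sq (by positivity)]
  -- the set in ℝ × ℝ
  set S' : Set (ℝ × ℝ) :=
    {p : ℝ × ℝ | (0 ≤ p.2 ∧ p.2 ≤ x * p.1 ∧ p.1 ≤ 1) ∧ 1 < p.1 ^ 2 + p.2 ^ 2} with hS'def
  set e : EuclideanSpace ℝ (Fin 2) ≃ᵐ ℝ × ℝ :=
    (MeasurableEquiv.toLp 2 (Fin 2 → ℝ)).symm.trans (MeasurableEquiv.finTwoArrow) with hedef
  have he : MeasurePreserving e volume volume :=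
    (volume_preserving_finTwoArrow ℝ).comp (EuclideanSpace.volume_preserving_symm_measurableEquiv_toLp (Fin 2))
  have hball : ∀ p : EuclideanSpace ℝ (Fin 2),
      p ∈ Metric.closedBall (0 : EuclideanSpace ℝ (Fin 2)) 1 ↔ p 0 ^ 2 + p 1 ^ 2 ≤ 1 := by
    intro p
    rw [mem_closedBall_zero_iff]
    have : ‖p‖ = Real.sqrt (p 0 ^ 2 + p 1 ^ 2) := by
      rw [EuclideanSpace.norm_eq, Fin.sum_univ_two]
      norm_num [sq_abs]
    rw [this]
    constructor
    · intro h
      nlinarith [Real.sq_sqrt (show (0:ℝ) ≤ p 0 ^ 2 + p 1 ^ 2 by positivity),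
        Real.sqrt_nonneg (p 0 ^ 2 + p 1 ^ 2)]
    · intro h
      calc Real.sqrt (p 0 ^ 2 + p 1 ^ 2) ≤ Real.sqrt 1 := Real.sqrt_le_sqrt h
      _ = 1 := Real.sqrt_one
  have hset : convexHull ℝ {pt 0 0, pt 1 0, pt 1 x} \
      Metric.closedBall (0 : EuclideanSpace ℝ (Fin 2)) 1 = e ⁻¹' S' := by
    ext p
    have hep : e p = (p 0, p 1) := rfl
    simp only [mem_diff, mem_preimage, hep, hS'def, mem_setOf_eq, pt_hull x hx, hball p, not_le]
  have hms' : MeasurableSet S' := by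
    apply MeasurableSet.inter
    · exact ((measurableSet_le measurable_const measurable_snd).inter
        ((measurableSet_le measurable_snd (measurable_fst.const_mul x)).inter
          (measurableSet_le measurable_fst measurable_const)))
    · exact measurableSet_lt measurable_const
        ((measurable_fst.pow_const 2).add (measurable_snd.pow_const 2))
  rw [hset, he.measure_preimage hms'.nullMeasurableSet]
  -- now work in ℝ × ℝ
  set f : ℝ → ℝ := fun a => Real.sqrt (1 - a ^ 2) with hfdef
  set g : ℝ → ℝ := fun a => x * a with hgdef
  have hfc : Continuous f := by
    apply Real.continuous_sqrt.comp
    continuity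
  have hgc : Continuous g := by continuity
  have hfg : ∀ a ∈ Ioo c 1, f a ≤ g a := by
    rintro a ⟨ha1, ha2⟩
    have h : 1 - a ^ 2 ≤ (x * a) ^ 2 := by
      nlinarith [mul_nonneg (mul_nonneg (sub_nonneg.2 ha1.le) (by linarith : (0:ℝ) ≤ a + c))
        (by positivity : (0:ℝ) ≤ 1 + x ^ 2)]
    calc f a ≤ Real.sqrt ((x * a) ^ 2) := Real.sqrt_le_sqrt h
    _ = x * a := Real.sqrt_sq (by nlinarith)
  -- a.e. equality to the region between f and g over Ioo c 1
  have hsub1 : regionBetween f g (Ioo c 1) ⊆ S' := region_sub x c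
  have hsub2 : S' \ regionBetween f g (Ioo c 1) ⊆
      {p : ℝ × ℝ | p.2 = x * p.1} ∪ ({1} : Set ℝ) ×ˢ (univ : Set ℝ) :=
    sub_region x c hx hc0 hc2
  have hnull : (volume : Measure ℝ).prod volume
      ({p : ℝ × ℝ | p.2 = x * p.1} ∪ ({1} : Set ℝ) ×ˢ (univ : Set ℝ)) = 0 := by
    apply measure_union_null (graph_null x)
    rw [Measure.prod_prod, Real.volume_singleton, zero_mul]
  have haeq : S' =ᵐ[(volume : Measure ℝ).prod volume] regionBetween f g (Ioo c 1) := by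
    rw [ae_eq_set]
    constructor
    · exact measure_mono_null hsub2 hnull
    · rw [diff_eq_empty.2 hsub1]
      exact measure_empty
  have hint_f : IntegrableOn f (Ioo c 1) := (hfc.integrableOn_Icc).mono_set Ioo_subset_Icc_self
  have hint_g : IntegrableOn g (Ioo c 1) := (hgc.integrableOn_Icc).mono_set Ioo_subset_Icc_self
  rw [Measure.volume_eq_prod, measure_congr haeq,
    volume_regionBetween_eq_integral hint_f hint_g measurableSet_Ioo hfg]
  have harcsinc : Real.arcsin c = Real.pi / 2 - Real.arctan x := by
    rw [Real.arcsin_eq_pi_div_two_sub_arccos]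
    congr 1
    rw [Real.arctan_eq_arccos hx.le]
  rw [hgdef, hfdef]
  rw [key_integral x c hx hc0 hc1 hxc harcsinc]
end

section
/- With x = (√1664 + √8748)/46, the quantity 3·(x − arctan(x)) lies strictly between 5.03 and 5.04 (so D(3) ≈ 5.0376). -/
lemma arctan_ge_cubic {t : ℝ} (ht : 0 ≤ t) : t - t ^ 3 / 3 ≤ Real.arctan t := by
  have key : MonotoneOn (fun s : ℝ => Real.arctan s - s + s ^ 3 / 3) (Set.Ici 0) := by
    apply monotoneOn_of_deriv_nonneg (convex_Ici 0)
    · exact ((Real.continuous_arctan.sub continuous_id).add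
        ((continuous_pow 3).div_const 3)).continuousOn
    · intro s _
      exact (((Real.differentiableAt_arctan s).sub differentiableAt_id).add
        ((differentiableAt_pow 3).div_const 3)).differentiableWithinAt
    · intro s hs
      rw [interior_Ici] at hs
      have hd : HasDerivAt (fun s : ℝ => Real.arctan s - s + s ^ 3 / 3)
          (1 / (1 + s ^ 2) - 1 + 3 * s ^ (3 - 1) / 3) s :=
        ((Real.hasDerivAt_arctan s).sub (hasDerivAt_id s)).add
          ((hasDerivAt_pow 3 s).div_const 3)
      rw [hd.deriv]
      have h1 : (0:ℝ) < 1 + s ^ 2 := by positivity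
      have h2 : 1 / (1 + s ^ 2) * (1 + s ^ 2) = 1 := by field_simp
      nlinarith [sq_nonneg s, sq_nonneg (s ^ 2), div_pos one_pos h1]
  have h0 := key Set.self_mem_Ici (Set.mem_Ici.mpr ht) ht
  simp only [Real.arctan_zero] at h0
  norm_num at h0
  linarith

lemma arctan_le_quintic {t : ℝ} (ht : 0 ≤ t) : Real.arctan t ≤ t - t ^ 3 / 3 + t ^ 5 / 5 := by
  have key : MonotoneOn (fun s : ℝ => s - s ^ 3 / 3 + s ^ 5 / 5 - Real.arctan s) (Set.Ici 0) := by
    apply monotoneOn_of_deriv_nonneg (convex_Ici 0)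
    · exact (((continuous_id.sub ((continuous_pow 3).div_const 3)).add
        ((continuous_pow 5).div_const 5)).sub Real.continuous_arctan).continuousOn
    · intro s _
      exact (((differentiableAt_id.sub ((differentiableAt_pow 3).div_const 3)).add
        ((differentiableAt_pow 5).div_const 5)).sub
        (Real.differentiableAt_arctan s)).differentiableWithinAt
    · intro s hs
      rw [interior_Ici] at hs
      have hd : HasDerivAt (fun s : ℝ => s - s ^ 3 / 3 + s ^ 5 / 5 - Real.arctan s)
          (1 - 3 * s ^ (3 - 1) / 3 + 5 * s ^ (5 - 1) / 5 - 1 / (1 + s ^ 2)) s :=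
        (((hasDerivAt_id s).sub ((hasDerivAt_pow 3 s).div_const 3)).add
          ((hasDerivAt_pow 5 s).div_const 5)).sub (Real.hasDerivAt_arctan s)
      rw [hd.deriv]
      have h1 : (0:ℝ) < 1 + s ^ 2 := by positivity
      have h2 : 1 / (1 + s ^ 2) * (1 + s ^ 2) = 1 := by field_simp
      nlinarith [sq_nonneg s, sq_nonneg (s ^ 2), sq_nonneg (s ^ 3), div_pos one_pos h1]
  have h0 := key Set.self_mem_Ici (Set.mem_Ici.mpr ht) ht
  simp only [Real.arctan_zero] at h0
  norm_num at h0
  linarith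

/-- With `x = (√1664 + √8748)/46`, the total dark area `D(3) = 3·(x − arctan x)` lies
strictly between `5.03` and `5.04`. -/
theorem D3_bounds :
    let x : ℝ := (Real.sqrt 1664 + Real.sqrt 8748) / 46
    5.03 < 3 * (x - Real.arctan x) ∧ 3 * (x - Real.arctan x) < 5.04 := by
  intro x
  have s1l : (40.7921:ℝ) < Real.sqrt 1664 := by
    rw [Real.lt_sqrt (by norm_num)]; norm_num
  have s1u : Real.sqrt 1664 < 40.7922 := by
    rw [Real.sqrt_lt' (by norm_num)]; norm_num
  have s2l : (93.5307:ℝ) < Real.sqrt 8748 := by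
    rw [Real.lt_sqrt (by norm_num)]; norm_num
  have s2u : Real.sqrt 8748 < 93.5308 := by
    rw [Real.sqrt_lt' (by norm_num)]; norm_num
  have hxa : (134.3228:ℝ)/46 < x := by unfold x; linarith
  have hxb : x < (134.3230:ℝ)/46 := by unfold x; linarith
  have hx0 : (0:ℝ) < x := by linarith
  set y : ℝ := x⁻¹ with hy
  have hy0 : 0 < y := inv_pos.mpr hx0
  have hxy : x * y = 1 := mul_inv_cancel₀ hx0.ne'
  have hya : (0.3424580:ℝ) < y := by
    rw [hy, lt_inv_comm₀ (by norm_num) hx0]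
    calc x < (134.3230:ℝ)/46 := hxb
    _ < (0.3424580:ℝ)⁻¹ := by norm_num
  have hyb : y < (0.3424587:ℝ) := by
    rw [hy, inv_lt_comm₀ hx0 (by norm_num)]
    calc (0.3424587:ℝ)⁻¹ < (134.3228:ℝ)/46 := by norm_num
    _ < x := hxa
  have harc : Real.arctan x = Real.pi / 2 - Real.arctan y := by
    have := Real.arctan_inv_of_pos hx0
    rw [← hy] at this
    linarith
  have hlo := arctan_ge_cubic hy0.le
  have hhi := arctan_le_quintic hy0.le
  have hpl := Real.pi_gt_d6
  have hpu := Real.pi_lt_d6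
  constructor
  · rw [harc]
    nlinarith [pow_lt_pow_left₀ hyb hy0.le (by norm_num : 3 ≠ 0)]
  · rw [harc]
    nlinarith [pow_lt_pow_left₀ hyb hy0.le (by norm_num : 5 ≠ 0),
      pow_lt_pow_left₀ hya (by norm_num : (0:ℝ) ≤ 0.3424580) (by norm_num : 3 ≠ 0)]
end
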